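/- arXiv:2409.06974 — 2 statements merged into one kernel-verified Lean document; each statement's English description precedes it below -/
import Mathlib

section
/- Let α be a nonempty finite alphabet. Then the family of star languages over α is incomparable to each of the following families of languages over α: the finite languages, the nilpotent languages, the definite languages, the ordered languages, the non-counting languages, the power-separating languages, and the suffix-closed languages. -/
open Language Computability

universe u

variable {α : Type}

/-- The n-fold repetition (power) of a word. -/
def wordPow (y : List α) : ℕ → List α
  | 0 => []
  | n + 1 => y ++ wordPow y n

/-- A star language: the Kleene star of some regular language. -/
def IsStarLang (L : Language α) : Prop :=
  ∃ H : Language α, H.IsRegular ∧ L = H∗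

/-- A left-sided comet. -/
def IsLeftComet (L : Language α) : Prop :=
  ∃ E G : Language α, E.IsRegular ∧ G.IsRegular ∧ G ≠ 0 ∧ G ≠ 1 ∧ L = E * G∗

/-- A right-sided comet. -/
def IsRightComet (L : Language α) : Prop :=
  ∃ G H : Language α, G.IsRegular ∧ H.IsRegular ∧ G ≠ 0 ∧ G ≠ 1 ∧ L = G∗ * H

/-- A two-sided comet. -/
def IsTwoComet (L : Language α) : Prop :=
  ∃ E G H : Language α, E.IsRegular ∧ G.IsRegular ∧ H.IsRegular ∧
    G ≠ 0 ∧ G ≠ 1 ∧ L = E * G∗ * H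

/-- A regular expression is union-free if it is built from the atoms `0` (empty language)
and single letters using only concatenation and Kleene star. -/
def RegularExpression.UnionFree : RegularExpression α → Prop
  | RegularExpression.zero => True
  | RegularExpression.epsilon => False
  | RegularExpression.char _ => True
  | RegularExpression.plus _ _ => False
  | RegularExpression.comp r s => r.UnionFree ∧ s.UnionFree
  | RegularExpression.star r => r.UnionFree

/-- A union-free language: the language of a union-free regular expression. -/
def IsUnionFree (L : Language α) : Prop :=
  ∃ r : RegularExpression α, r.UnionFree ∧ r.matches' = L

/-- A monoidal language. -/
def IsMonoidal (L : Language α) : Prop := L = (⊤ : Language α)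

/-- The language of one-letter words with letters from `X`. -/
def lettersLang (X : Set α) : Language α := {w : List α | ∃ a ∈ X, w = [a]}

/-- A combinational language: `⊤ · X` for a set `X` of one-letter words. -/
def IsCombinational (L : Language α) : Prop :=
  ∃ X : Set α, L = (⊤ : Language α) * lettersLang X

/-- A symmetric definite language: `E · ⊤ · H` with `E, H` regular. -/
def IsSymDef (L : Language α) : Prop :=
  ∃ E H : Language α, E.IsRegular ∧ H.IsRegular ∧ L = E * (⊤ : Language α) * H

/-- A nilpotent language: finite or with finite complement. -/
def IsNilpotentLang (L : Language α) : Prop := L.Finite ∨ (Lᶜ : Language α).Finite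

/-- A definite language: `A ∪ ⊤ · B` with `A, B` finite. -/
def IsDefinite (L : Language α) : Prop :=
  ∃ A B : Language α, A.Finite ∧ B.Finite ∧ L = A + (⊤ : Language α) * B  -- `+` of languages is union

/-- An ordered language: accepted by a DFA with linearly ordered state set
whose transition maps are all monotone. -/
def IsOrdered (L : Language α) : Prop :=
  ∃ (σ : Type) (_ : Fintype σ) (_ : LinearOrder σ) (M : DFA α σ),
    (∀ a : α, Monotone fun q => M.step q a) ∧ M.accepts = L

/-- The non-counting property. -/
def HasNonCounting (L : Language α) : Prop :=
  ∃ k : ℕ, 1 ≤ k ∧ ∀ x y z : List α,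
    (x ++ wordPow y k ++ z ∈ L ↔ x ++ wordPow y (k + 1) ++ z ∈ L)

/-- A non-counting (star-free) regular language. -/
def IsNonCounting (L : Language α) : Prop := L.IsRegular ∧ HasNonCounting L

/-- The power-separating property. -/
def HasPowerSep (L : Language α) : Prop :=
  ∃ m : ℕ, 1 ≤ m ∧ ∀ x : List α,
    (∀ n, m ≤ n → wordPow x n ∉ L) ∨ (∀ n, m ≤ n → wordPow x n ∈ L)

/-- A power-separating regular language. -/
def IsPowerSep (L : Language α) : Prop := L.IsRegular ∧ HasPowerSep L

/-- A suffix-closed (regular) language. -/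
def IsSuffixClosed (L : Language α) : Prop :=
  L.IsRegular ∧ ∀ x y : List α, x ++ y ∈ L → y ∈ L

/-- A circular (regular) language. -/
def IsCircular (L : Language α) : Prop :=
  L.IsRegular ∧ ∀ u v : List α, u ++ v ∈ L → v ++ u ∈ L

/-- A commutative (regular) language. -/
def IsCommutative (L : Language α) : Prop :=
  L.IsRegular ∧ ∀ w ∈ L, ∀ v : List α, w.Perm v → v ∈ L

/-- The reversal of a language. -/
def Reversal (L : Language α) : Language α := {w : List α | ∃ v ∈ L, w = v.reverse}

/-- Two families of languages are incomparable if neither is contained in the other. -/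
def Incomparable (P Q : Language α → Prop) : Prop :=
  (∃ L : Language α, P L ∧ ¬ Q L) ∧ (∃ L : Language α, Q L ∧ ¬ P L)

/-- A finite language. -/
def IsFiniteLang (L : Language α) : Prop := L.Finite

section AuxStar

lemma wordPow_single (a : α) (n : ℕ) : wordPow [a] n = List.replicate n a := by
  induction n with
  | zero => rfl
  | succ n ih => simp [wordPow, ih, List.replicate_succ]

lemma wordPow_single_length (a : α) (n : ℕ) : (wordPow [a] n).length = n := by
  rw [wordPow_single]; simp

lemma flatten_replicate_pair (a : α) (n : ℕ) :
    (List.replicate n [a, a]).flatten = wordPow [a] (2 * n) := by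
  induction n with
  | zero => rfl
  | succ n ih =>
    rw [List.replicate_succ, List.flatten_cons, ih]
    show _ = wordPow [a] (2 * n + 2)
    simp [wordPow]

lemma even_wordPow_mem (a : α) (n : ℕ) :
    wordPow [a] (2 * n) ∈ (({[a, a]} : Language α))∗ := by
  rw [← flatten_replicate_pair]
  exact Language.join_mem_kstar (fun y hy => by rw [List.eq_of_mem_replicate hy]; exact rfl)

lemma mem_star_even_length {a : α} {w : List α}
    (h : w ∈ (({[a, a]} : Language α))∗) : Even w.length := by
  rw [Language.mem_kstar] at h
  obtain ⟨Ls, rfl, hLs⟩ := h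
  induction Ls with
  | nil => simp
  | cons y t ih =>
    have hy : y = [a, a] := hLs y List.mem_cons_self
    obtain ⟨k, hk⟩ := ih (fun z hz => hLs z (List.mem_cons_of_mem _ hz))
    rw [List.flatten_cons, hy]
    exact ⟨k + 1, by
      simp only [List.length_append, List.length_cons, List.length_nil, hk]; omega⟩

lemma wordPow_mem_star_iff (a : α) (n : ℕ) :
    wordPow [a] n ∈ (({[a, a]} : Language α))∗ ↔ Even n := by
  constructor
  · intro h
    have := mem_star_even_length h
    rwa [wordPow_single_length] at this
  · rintro ⟨k, rfl⟩
    have h2 : k + k = 2 * k := by omega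
    rw [h2]
    exact even_wordPow_mem a k

open Classical in
/-- A DFA accepting exactly the word `[a, a]`. -/
noncomputable def twoDFA (a : α) : DFA α (Fin 4) where
  step q c := if q = 0 ∧ c = a then 1 else if q = 1 ∧ c = a then 2 else 3
  start := 0
  accept := {2}

lemma twoDFA_step0a (a : α) : (twoDFA a).step 0 a = 1 := by
  simp only [twoDFA]; rw [if_pos (by simp)]

lemma twoDFA_step0 (a c : α) (hc : c ≠ a) : (twoDFA a).step 0 c = 3 := by
  simp only [twoDFA]; rw [if_neg (by rintro ⟨-, h⟩; exact hc h), if_neg (by rintro ⟨h, -⟩; exact absurd h (by decide))]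

lemma twoDFA_step1a (a : α) : (twoDFA a).step 1 a = 2 := by
  simp only [twoDFA]
  rw [if_neg (by rintro ⟨h, -⟩; exact absurd h (by decide)), if_pos (by simp)]

lemma twoDFA_step1 (a c : α) (hc : c ≠ a) : (twoDFA a).step 1 c = 3 := by
  simp only [twoDFA]
  rw [if_neg (by rintro ⟨h, -⟩; exact absurd h (by decide)), if_neg (by rintro ⟨-, h⟩; exact hc h)]

lemma twoDFA_step2 (a c : α) : (twoDFA a).step 2 c = 3 := by
  simp only [twoDFA]
  rw [if_neg (by rintro ⟨h, -⟩; exact absurd h (by decide)),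
    if_neg (by rintro ⟨h, -⟩; exact absurd h (by decide))]

lemma twoDFA_step3 (a c : α) : (twoDFA a).step 3 c = 3 := by
  simp only [twoDFA]
  rw [if_neg (by rintro ⟨h, -⟩; exact absurd h (by decide)),
    if_neg (by rintro ⟨h, -⟩; exact absurd h (by decide))]

lemma twoDFA_eval3 (a : α) (w : List α) : (twoDFA a).evalFrom 3 w = 3 := by
  induction w with
  | nil => rfl
  | cons c t ih =>
    show (twoDFA a).evalFrom ((twoDFA a).step 3 c) t = 3
    rw [twoDFA_step3]; exact ih

lemma twoDFA_eval2 (a : α) (w : List α) : (twoDFA a).evalFrom 2 w = 2 ↔ w = [] := by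
  cases w with
  | nil => simp [DFA.evalFrom_nil]
  | cons c t =>
    show (twoDFA a).evalFrom ((twoDFA a).step 2 c) t = 2 ↔ _
    rw [twoDFA_step2, twoDFA_eval3]
    simp

lemma twoDFA_eval1 (a : α) (w : List α) : (twoDFA a).evalFrom 1 w = 2 ↔ w = [a] := by
  cases w with
  | nil =>
    simp only [DFA.evalFrom_nil]
    constructor
    · intro h; exact absurd h (by decide)
    · intro h; simp at h
  | cons c t =>
    show (twoDFA a).evalFrom ((twoDFA a).step 1 c) t = 2 ↔ _
    by_cases hc : c = a
    · subst hc
      rw [twoDFA_step1a, twoDFA_eval2]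
      simp
    · rw [twoDFA_step1 a c hc, twoDFA_eval3]
      constructor
      · intro h; exact absurd h (by decide)
      · intro h; rw [List.cons_eq_cons] at h; exact absurd h.1 hc

lemma twoDFA_eval0 (a : α) (w : List α) : (twoDFA a).evalFrom 0 w = 2 ↔ w = [a, a] := by
  cases w with
  | nil =>
    simp only [DFA.evalFrom_nil]
    constructor
    · intro h; exact absurd h (by decide)
    · intro h; simp at h
  | cons c t =>
    show (twoDFA a).evalFrom ((twoDFA a).step 0 c) t = 2 ↔ _
    by_cases hc : c = a
    · subst hc
      rw [twoDFA_step0a, twoDFA_eval1]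
      simp
    · rw [twoDFA_step0 a c hc, twoDFA_eval3]
      constructor
      · intro h; exact absurd h (by decide)
      · intro h; rw [List.cons_eq_cons] at h; exact absurd h.1 hc

lemma twoDFA_accepts (a : α) : (twoDFA a).accepts = ({[a, a]} : Language α) := by
  ext w
  rw [DFA.mem_accepts]
  show (twoDFA a).evalFrom 0 w ∈ ({2} : Set (Fin 4)) ↔ w ∈ ({[a, a]} : Set (List α))
  rw [Set.mem_singleton_iff, Set.mem_singleton_iff, twoDFA_eval0]

/-- The one-state DFA accepting nothing. -/
def zeroDFA : DFA α (Fin 1) where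
  step _ _ := 0
  start := 0
  accept := ∅

lemma zeroDFA_accepts : (zeroDFA : DFA α (Fin 1)).accepts = 0 := by
  ext w
  rw [DFA.mem_accepts]
  simp [zeroDFA, Language.notMem_zero]

lemma zero_isRegular : (0 : Language α).IsRegular :=
  ⟨Fin 1, inferInstance, zeroDFA, zeroDFA_accepts⟩

lemma evalFrom_replicate {σ : Type} (M : DFA α σ) (a : α) (n : ℕ) (q : σ) :
    M.evalFrom q (List.replicate n a) = (fun s => M.step s a)^[n] q := by
  induction n generalizing q with
  | zero => rfl
  | succ n ih =>
    rw [List.replicate_succ]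
    show M.evalFrom (M.step q a) (List.replicate n a) = _
    rw [ih, Function.iterate_succ_apply]

lemma iterate_eventually_const {σ : Type} [Fintype σ] [LinearOrder σ] {f : σ → σ}
    (hf : Monotone f) (q : σ) : ∃ N, ∀ n, N ≤ n → f^[n] q = f^[N] q := by
  have key : ∃ m, f^[m + 1] q = f^[m] q := by
    obtain ⟨i, j, hne, heq⟩ := Finite.exists_ne_map_eq_of_infinite (fun n => f^[n] q)
    rcases le_total q (f q) with h | h
    · have mono := hf.monotone_iterate_of_le_map h
      rcases hne.lt_or_gt with hij | hij
      · exact ⟨i, le_antisymm (heq ▸ mono (Nat.succ_le_of_lt hij)) (mono (Nat.le_succ i))⟩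
      · exact ⟨j, le_antisymm (heq ▸ mono (Nat.succ_le_of_lt hij)) (mono (Nat.le_succ j))⟩
    · have anti := hf.antitone_iterate_of_map_le h
      rcases hne.lt_or_gt with hij | hij
      · exact ⟨i, le_antisymm (anti (Nat.le_succ i)) (heq ▸ anti (Nat.succ_le_of_lt hij))⟩
      · exact ⟨j, le_antisymm (anti (Nat.le_succ j)) (heq ▸ anti (Nat.succ_le_of_lt hij))⟩
  obtain ⟨m, hm⟩ := key
  refine ⟨m, fun n hn => ?_⟩
  induction n, hn using Nat.le_induction with
  | base => rfl
  | succ k hk ih =>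
    rw [Function.iterate_succ_apply', ih, ← Function.iterate_succ_apply' f m q, hm]

end AuxStar


/-- Over a nonempty alphabet, `STAR` is incomparable to each of
`FIN`, `NIL`, `DEF`, `ORD`, `NC`, `PS`, and `SUF`. -/
theorem star_incomparable_fin_nil_def_ord_nc_ps_suf [Fintype α] [Nonempty α] :
    ∀ Q ∈ ([IsFiniteLang, IsNilpotentLang, IsDefinite, IsOrdered,
            IsNonCounting, IsPowerSep, IsSuffixClosed] : List (Language α → Prop)),
    Incomparable IsStarLang Q := by
  obtain ⟨a⟩ := (inferInstance : Nonempty α)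
  set L : Language α := (({[a, a]} : Language α))∗ with hL
  -- L is a star language
  have hstar : IsStarLang L :=
    ⟨{[a, a]}, ⟨Fin 4, inferInstance, twoDFA a, twoDFA_accepts a⟩, rfl⟩
  have hmem : ∀ n, wordPow [a] n ∈ L ↔ Even n := fun n => wordPow_mem_star_iff a n
  have heven : ∀ w ∈ L, Even w.length := fun w hw => mem_star_even_length hw
  -- L is infinite, with infinite complement
  have hLinf : Set.Infinite (L : Set (List α)) := by
    apply Set.infinite_of_injective_forall_mem (f := fun n : ℕ => wordPow [a] (2 * n))
    · intro m n hmn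
      have := congrArg List.length hmn
      rw [wordPow_single_length, wordPow_single_length] at this
      omega
    · intro n
      exact (hmem (2 * n)).2 ⟨n, by omega⟩
  have hLcinf : Set.Infinite ((Lᶜ : Language α) : Set (List α)) := by
    apply Set.infinite_of_injective_forall_mem (f := fun n : ℕ => wordPow [a] (2 * n + 1))
    · intro m n hmn
      have := congrArg List.length hmn
      rw [wordPow_single_length, wordPow_single_length] at this
      omega
    · intro n
      intro hn
      have := (hmem (2 * n + 1)).1 hn
      rw [Nat.even_add_one] at this
      exact this ⟨n, by omega⟩
  -- the zero language is not a star language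
  have hzero_star : ¬ IsStarLang (0 : Language α) := by
    rintro ⟨H, -, h0⟩
    have := Language.nil_mem_kstar H
    rw [← h0] at this
    exact Language.notMem_zero _ this
  -- membership facts
  have haa : [a] ++ [a] ∈ L := by
    have : [a] ++ [a] = wordPow [a] 2 := by simp [wordPow]
    rw [this]
    exact (hmem 2).2 ⟨1, by omega⟩
  have ha : [a] ∉ L := by
    intro h
    have : [a] = wordPow [a] 1 := by simp [wordPow]
    rw [this] at h
    have := (hmem 1).1 h
    exact (Nat.not_even_iff.2 rfl) this
  intro Q hQ
  simp only [List.mem_cons, List.not_mem_nil, or_false] at hQ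
  rcases hQ with rfl | rfl | rfl | rfl | rfl | rfl | rfl
  · -- FIN
    refine ⟨⟨L, hstar, fun h => hLinf h⟩, ⟨0, ?_, hzero_star⟩⟩
    exact Set.finite_empty
  · -- NIL
    refine ⟨⟨L, hstar, ?_⟩, ⟨0, Or.inl Set.finite_empty, hzero_star⟩⟩
    rintro (h | h)
    · exact hLinf h
    · exact hLcinf h
  · -- DEF
    refine ⟨⟨L, hstar, ?_⟩, ⟨0, ⟨0, 0, Set.finite_empty, Set.finite_empty, by simp⟩,
      hzero_star⟩⟩
    rintro ⟨A, B, hA, hB, hLd⟩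
    obtain ⟨w, hwL, hwA⟩ := (hLinf.diff hA).nonempty
    have hwm : w ∈ A + (⊤ : Language α) * B := by rw [← hLd]; exact hwL
    rw [Language.mem_add] at hwm
    rcases hwm with h | h
    · exact hwA h
    · rw [Language.mem_mul] at h
      obtain ⟨u, hu, v, hv, huv⟩ := h
      have hmem2 : ([a] ++ u) ++ v ∈ (⊤ : Language α) * B :=
        Language.append_mem_mul trivial hv
      have hmem3 : ([a] ++ u) ++ v ∈ L := by
        rw [hLd, Language.mem_add]
        exact Or.inr hmem2
      have h1 : Even w.length := heven w hwL
      have h2 : Even (([a] ++ u) ++ v).length := heven _ hmem3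
      rw [List.append_assoc, huv] at h2
      rw [List.length_append, List.length_singleton] at h2
      rw [Nat.even_add] at h2
      simp at h2
      rw [Nat.even_iff] at h1
      rw [Nat.odd_iff] at h2
      omega
  · -- ORD
    refine ⟨⟨L, hstar, ?_⟩, ⟨0, ?_, hzero_star⟩⟩
    · rintro ⟨σ, _, _, M, hmono, hacc⟩
      obtain ⟨N, hN⟩ := iterate_eventually_const (hmono a) M.start
      have hev : ∀ n, (wordPow [a] n ∈ L ↔ (fun s => M.step s a)^[n] M.start ∈ M.accept) := by
        intro n
        rw [← hacc, DFA.mem_accepts]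
        show M.evalFrom M.start (wordPow [a] n) ∈ M.accept ↔ _
        rw [wordPow_single, evalFrom_replicate]
      have he := (hev (2 * N)).1 ((hmem (2 * N)).2 ⟨N, by omega⟩)
      rw [hN (2 * N) (by omega)] at he
      have ho : wordPow [a] (2 * N + 1) ∈ L := by
        rw [hev (2 * N + 1), hN (2 * N + 1) (by omega)]
        exact he
      have := (hmem (2 * N + 1)).1 ho
      rw [Nat.even_add_one] at this
      exact this ⟨N, by omega⟩
    · exact ⟨Fin 1, inferInstance, inferInstance, zeroDFA,
        fun _ => monotone_const, zeroDFA_accepts⟩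
  · -- NC
    refine ⟨⟨L, hstar, ?_⟩, ⟨0, ⟨zero_isRegular, 1, le_refl 1, fun x y z => ?_⟩,
      hzero_star⟩⟩
    · rintro ⟨-, k, hk, hnc⟩
      have := hnc [] [a] []
      simp only [List.nil_append, List.append_nil] at this
      rw [hmem, hmem, Nat.even_add_one] at this
      rcases Nat.even_or_odd k with h | h
      · exact (this.1 h) h
      · rw [Nat.odd_iff] at h
        rw [Nat.even_iff] at this
        omega
    · constructor <;> (intro h; exact absurd h (Language.notMem_zero _))
  · -- PS
    refine ⟨⟨L, hstar, ?_⟩, ⟨0, ⟨zero_isRegular, 1, le_refl 1,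
      fun x => Or.inl (fun n _ h => Language.notMem_zero _ h)⟩, hzero_star⟩⟩
    rintro ⟨-, m, hm, hps⟩
    rcases hps [a] with h | h
    · exact h (2 * m) (by omega) ((hmem (2 * m)).2 ⟨m, by omega⟩)
    · have := (hmem (2 * m + 1)).1 (h (2 * m + 1) (by omega))
      rw [Nat.even_add_one] at this
      exact this ⟨m, by omega⟩
  · -- SUF
    refine ⟨⟨L, hstar, ?_⟩, ⟨0, ⟨zero_isRegular,
      fun x y h => absurd h (Language.notMem_zero _)⟩, hzero_star⟩⟩
    rintro ⟨-, hsuf⟩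
    exact ha (hsuf [a] [a] haa)
end

section
/- Let α be a finite alphabet with two distinct letters a and b. Then each of the families of symmetric definite, left-sided comet, right-sided comet, and two-sided comet languages over α is incomparable to each of the families of suffix-closed, circular, and commutative languages over α. -/
open Language Computability

universe u

variable {α : Type}

section
variable {α : Type}

lemma myTop_regular : (⊤ : Language α).IsRegular :=
  ⟨Unit, inferInstance, ⟨fun _ _ => (), (), Set.univ⟩, by
    ext w; exact iff_of_true (Set.mem_univ _) trivial⟩

private lemma foldl_const_true (w : List α) :
    w.foldl (fun (_ : Bool) (_ : α) => true) true = true := by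
  induction w with
  | nil => rfl
  | cons c t ih => simpa using ih

lemma myOne_regular : (1 : Language α).IsRegular :=
  ⟨Bool, inferInstance, ⟨fun _ _ => true, false, {false}⟩, by
    ext w
    cases w with
    | nil => simp [DFA.mem_accepts, DFA.eval, DFA.evalFrom]
    | cons c t =>
      simp [DFA.mem_accepts, DFA.eval, DFA.evalFrom, foldl_const_true]⟩

lemma mySingle_regular (a : α) : ({[a]} : Language α).IsRegular := by
  classical
  set f : Fin 3 → α → Fin 3 :=
    fun q c => if q = 0 then (if c = a then 1 else 2) else 2 with hf
  have s0 : ∀ c, f 0 c = if c = a then 1 else 2 := fun c => if_pos rfl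
  have sne : ∀ (q : Fin 3) c, q ≠ 0 → f q c = 2 := fun q c h => if_neg h
  have h2 : ∀ t : List α, t.foldl f 2 = 2 := by
    intro t
    induction t with
    | nil => rfl
    | cons d u ih => rw [List.foldl_cons, sne 2 d (by decide)]; exact ih
  have h1 : ∀ t : List α, t ≠ [] → t.foldl f 1 = 2 := by
    intro t ht
    cases t with
    | nil => exact absurd rfl ht
    | cons d u => rw [List.foldl_cons, sne 1 d (by decide)]; exact h2 u
  refine ⟨Fin 3, inferInstance, ⟨f, 0, {1}⟩, ?_⟩
  ext w
  show (w.foldl f 0) ∈ ({1} : Set (Fin 3)) ↔ w ∈ ({[a]} : Language α)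
  cases w with
  | nil =>
    simp only [List.foldl_nil]
    constructor
    · intro h0; exact absurd (Set.mem_singleton_iff.mp h0) (by decide)
    · intro h0; exact absurd (Set.mem_singleton_iff.mp h0) (by simp)
  | cons c t =>
    rw [List.foldl_cons, s0 c]
    by_cases hc : c = a
    · subst hc
      rw [if_pos rfl]
      cases t with
      | nil => exact iff_of_true rfl rfl
      | cons d u =>
        rw [h1 _ (by simp)]
        constructor
        · intro h0; exact absurd (Set.mem_singleton_iff.mp h0) (by decide)
        · intro h0; exact absurd (Set.mem_singleton_iff.mp h0) (by simp)
    · rw [if_neg hc, h2]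
      constructor
      · intro h0; exact absurd (Set.mem_singleton_iff.mp h0) (by decide)
      · intro h0
        exact absurd (List.head_eq_of_cons_eq (Set.mem_singleton_iff.mp h0)) hc

lemma myTop_kstar : ((⊤ : Language α)∗) = ⊤ := by
  apply le_antisymm le_top
  intro w _
  exact ⟨[w], by simp, fun y _ => trivial⟩

lemma myTop_ne_zero : (⊤ : Language α) ≠ 0 := by
  intro h
  have : ([] : List α) ∈ (⊤ : Language α) := trivial
  rw [h] at this
  exact Language.notMem_zero _ this

lemma myTop_ne_one (a : α) : (⊤ : Language α) ≠ 1 := by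
  intro h
  have : ([a] : List α) ∈ (⊤ : Language α) := trivial
  rw [h] at this
  simp at this

lemma mem_La {a : α} {w : List α} :
    w ∈ ({[a]} : Language α) * ⊤ ↔ ∃ t, w = a :: t := by
  constructor
  · rintro ⟨u, hu, v, -, rfl⟩
    replace hu : u = [a] := hu
    subst hu
    exact ⟨v, rfl⟩
  · rintro ⟨t, rfl⟩
    exact ⟨[a], rfl, t, trivial, rfl⟩

lemma mem_Lb {a : α} {w : List α} :
    w ∈ (⊤ : Language α) * ({[a]} : Language α) ↔ ∃ u, w = u ++ [a] := by
  constructor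
  · rintro ⟨u, -, v, hv, rfl⟩
    replace hv : v = [a] := hv
    subst hv
    exact ⟨u, rfl⟩
  · rintro ⟨u, rfl⟩
    exact ⟨u, trivial, [a], rfl, rfl⟩

lemma exists_mem_ne_nil {G : Language α} (hG0 : G ≠ 0) (hG1 : G ≠ 1) :
    ∃ g ∈ G, g ≠ [] := by
  by_contra h
  push_neg at h
  rcases Set.eq_empty_or_nonempty (G : Set (List α)) with h' | ⟨g, hg⟩
  · exact hG0 h'
  · apply hG1
    ext w
    rw [Language.mem_one]
    constructor
    · exact h w
    · rintro rfl
      rwa [← h g hg]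

lemma mem_kstar_single {G : Language α} {g : List α} (hg : g ∈ G) : g ∈ G∗ :=
  ⟨[g], by simp, by simpa⟩

/-! Witness language definitions and facts -/

section Witness

lemma La_symdef (a : α) : IsSymDef (({[a]} : Language α) * ⊤) :=
  ⟨{[a]}, 1, mySingle_regular a, myOne_regular, (mul_one _).symm⟩

lemma La_left (a : α) : IsLeftComet (({[a]} : Language α) * ⊤) :=
  ⟨{[a]}, ⊤, mySingle_regular a, myTop_regular, myTop_ne_zero, myTop_ne_one a,
    by rw [myTop_kstar]⟩

lemma La_two (a : α) : IsTwoComet (({[a]} : Language α) * ⊤) :=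
  ⟨{[a]}, ⊤, 1, mySingle_regular a, myTop_regular, myOne_regular,
    myTop_ne_zero, myTop_ne_one a, by rw [myTop_kstar, mul_one]⟩

lemma Lb_right (a : α) : IsRightComet ((⊤ : Language α) * ({[a]} : Language α)) :=
  ⟨⊤, {[a]}, myTop_regular, mySingle_regular a, myTop_ne_zero, myTop_ne_one a,
    by rw [myTop_kstar]⟩

lemma La_not_suf (a : α) : ¬ IsSuffixClosed (({[a]} : Language α) * ⊤) := by
  rintro ⟨-, h⟩
  have h1 : [a] ∈ ({[a]} : Language α) * ⊤ := mem_La.mpr ⟨[], rfl⟩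
  have h2 := h [a] [] (by simpa using h1)
  obtain ⟨t, ht⟩ := mem_La.mp h2
  simp at ht

lemma La_not_circ (a b : α) (hab : a ≠ b) : ¬ IsCircular (({[a]} : Language α) * ⊤) := by
  rintro ⟨-, h⟩
  have h1 : [a] ++ [b] ∈ ({[a]} : Language α) * ⊤ := mem_La.mpr ⟨[b], rfl⟩
  obtain ⟨t, ht⟩ := mem_La.mp (h [a] [b] h1)
  exact hab (List.head_eq_of_cons_eq ht.symm)

lemma La_not_comm (a b : α) (hab : a ≠ b) : ¬ IsCommutative (({[a]} : Language α) * ⊤) := by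
  rintro ⟨-, h⟩
  have h1 : [a, b] ∈ ({[a]} : Language α) * ⊤ := mem_La.mpr ⟨[b], rfl⟩
  obtain ⟨t, ht⟩ := mem_La.mp (h _ h1 [b, a] (List.Perm.swap b a []))
  exact hab (List.head_eq_of_cons_eq ht.symm)

lemma Lb_not_suf (a : α) : ¬ IsSuffixClosed ((⊤ : Language α) * ({[a]} : Language α)) := by
  rintro ⟨-, h⟩
  have h1 : [a] ∈ (⊤ : Language α) * ({[a]} : Language α) := mem_Lb.mpr ⟨[], rfl⟩
  have h2 := h [a] [] (by simpa using h1)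
  obtain ⟨u, hu⟩ := mem_Lb.mp h2
  simp at hu

lemma Lb_not_circ (a b : α) (hab : a ≠ b) : ¬ IsCircular ((⊤ : Language α) * ({[a]} : Language α)) := by
  rintro ⟨-, h⟩
  have h1 : [b] ++ [a] ∈ (⊤ : Language α) * ({[a]} : Language α) := mem_Lb.mpr ⟨[b], rfl⟩
  obtain ⟨u, hu⟩ := mem_Lb.mp (h [b] [a] h1)
  have hu' : u ++ [a] = [a] ++ [b] := hu.symm
  have h2 := (List.append_inj' hu' rfl).2
  injection h2 with h3
  exact hab h3

lemma Lb_not_comm (a b : α) (hab : a ≠ b) : ¬ IsCommutative ((⊤ : Language α) * ({[a]} : Language α)) := by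
  rintro ⟨-, h⟩
  have h1 : [b, a] ∈ (⊤ : Language α) * ({[a]} : Language α) := mem_Lb.mpr ⟨[b], rfl⟩
  obtain ⟨u, hu⟩ := mem_Lb.mp (h _ h1 [a, b] (List.Perm.swap a b []))
  have hu' : u ++ [a] = [a] ++ [b] := hu.symm
  have h2 := (List.append_inj' hu' rfl).2
  injection h2 with h3
  exact hab h3

/-! `1` is suffix-closed, circular, commutative, but none of the P's. -/

lemma one_suf : IsSuffixClosed (1 : Language α) := by
  refine ⟨myOne_regular, fun x y h => ?_⟩
  rw [Language.mem_one] at h ⊢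
  exact (List.append_eq_nil_iff.mp h).2

lemma one_circ : IsCircular (1 : Language α) := by
  refine ⟨myOne_regular, fun u v h => ?_⟩
  rw [Language.mem_one] at h ⊢
  obtain ⟨h1, h2⟩ := List.append_eq_nil_iff.mp h
  rw [h1, h2]; rfl

lemma one_comm : IsCommutative (1 : Language α) := by
  refine ⟨myOne_regular, fun w hw v hp => ?_⟩
  rw [Language.mem_one] at hw ⊢
  subst hw
  exact hp.symm.eq_nil

lemma one_not_symdef (a : α) : ¬ IsSymDef (1 : Language α) := by
  rintro ⟨E, H, -, -, heq⟩
  have h0 : ([] : List α) ∈ E * ⊤ * H := heq ▸ Language.nil_mem_one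
  obtain ⟨x, hx, h', hh, -⟩ := h0
  obtain ⟨e, he, -, -, -⟩ := hx
  have hmem : (e ++ [a]) ++ h' ∈ E * ⊤ * H :=
    Language.append_mem_mul (Language.append_mem_mul he trivial) hh
  rw [← heq, Language.mem_one] at hmem
  simp at hmem

lemma one_not_left : ¬ IsLeftComet (1 : Language α) := by
  rintro ⟨E, G, -, -, hG0, hG1, heq⟩
  have h0 : ([] : List α) ∈ E * G∗ := heq ▸ Language.nil_mem_one
  obtain ⟨e, he, -, -, -⟩ := h0
  obtain ⟨g, hg, hgne⟩ := exists_mem_ne_nil hG0 hG1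
  have hmem : e ++ g ∈ E * G∗ := Language.append_mem_mul he (mem_kstar_single hg)
  rw [← heq, Language.mem_one] at hmem
  exact hgne (List.append_eq_nil_iff.mp hmem).2

lemma one_not_right : ¬ IsRightComet (1 : Language α) := by
  rintro ⟨G, H, -, -, hG0, hG1, heq⟩
  have h0 : ([] : List α) ∈ G∗ * H := heq ▸ Language.nil_mem_one
  obtain ⟨-, -, h', hh, -⟩ := h0
  obtain ⟨g, hg, hgne⟩ := exists_mem_ne_nil hG0 hG1
  have hmem : g ++ h' ∈ G∗ * H := Language.append_mem_mul (mem_kstar_single hg) hh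
  rw [← heq, Language.mem_one] at hmem
  exact hgne (List.append_eq_nil_iff.mp hmem).1

lemma one_not_two : ¬ IsTwoComet (1 : Language α) := by
  rintro ⟨E, G, H, -, -, -, hG0, hG1, heq⟩
  have h0 : ([] : List α) ∈ E * G∗ * H := heq ▸ Language.nil_mem_one
  obtain ⟨x, hx, h', hh, -⟩ := h0
  obtain ⟨e, he, -, -, -⟩ := hx
  obtain ⟨g, hg, hgne⟩ := exists_mem_ne_nil hG0 hG1
  have hmem : (e ++ g) ++ h' ∈ E * G∗ * H :=
    Language.append_mem_mul (Language.append_mem_mul he (mem_kstar_single hg)) hh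
  rw [← heq, Language.mem_one] at hmem
  have := (List.append_eq_nil_iff.mp hmem).1
  exact hgne (List.append_eq_nil_iff.mp this).2

end Witness
end

/-- `SYDEF`, `LCOM`, `RCOM`, and `2COM` are each incomparable to each of
`SUF`, `CIRC`, and `COMM`. -/
theorem sydef_comets_incomparable_suf_circ_comm [Fintype α] (a b : α) (hab : a ≠ b) :
    ∀ P ∈ ([IsSymDef, IsLeftComet, IsRightComet, IsTwoComet] : List (Language α → Prop)),
    ∀ Q ∈ ([IsSuffixClosed, IsCircular, IsCommutative] : List (Language α → Prop)),
    Incomparable P Q := by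
  intro P hP Q hQ
  simp only [List.mem_cons, List.mem_singleton, List.not_mem_nil, or_false] at hP hQ
  have hQ1 : Q (1 : Language α) ∧ (¬ Q (({[a]} : Language α) * ⊤)) ∧
      (¬ Q ((⊤ : Language α) * ({[a]} : Language α))) := by
    rcases hQ with rfl | rfl | rfl
    · exact ⟨one_suf, La_not_suf a, Lb_not_suf a⟩
    · exact ⟨one_circ, La_not_circ a b hab, Lb_not_circ a b hab⟩
    · exact ⟨one_comm, La_not_comm a b hab, Lb_not_comm a b hab⟩
  rcases hP with rfl | rfl | rfl | rfl
  · exact ⟨⟨_, La_symdef a, hQ1.2.1⟩, ⟨1, hQ1.1, one_not_symdef a⟩⟩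
  · exact ⟨⟨_, La_left a, hQ1.2.1⟩, ⟨1, hQ1.1, one_not_left⟩⟩
  · exact ⟨⟨_, Lb_right a, hQ1.2.2⟩, ⟨1, hQ1.1, one_not_right⟩⟩
  · exact ⟨⟨_, La_two a, hQ1.2.1⟩, ⟨1, hQ1.1, one_not_two⟩⟩
end
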